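/- arXiv:1805.09063 — 4 statements merged into one kernel-verified Lean document; each statement's English description precedes it below -/
import Mathlib

section
/- Let G be a locally compact second countable group acting measurably and measure-preservingly on a standard Borel probability space (X, μ). If there exists a Borel function f : X → (0, ∞) such that Δ_G(g) = f(g·x)⁻¹ · f(x) for (λ_G × μ)-almost all (g, x) ∈ G × X, then G is unimodular. -/
open MeasureTheory ENNReal

private lemma psi_lt {a b : ℝ} (ha : 0 < a) (hab : a < b) :
    a / (1 + a) < b / (1 + b) := by
  rw [div_lt_div_iff₀ (by linarith) (by linarith)]
  nlinarith

private lemma psi_integrable {X : Type*} [MeasurableSpace X] (μ : Measure X)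
    [IsProbabilityMeasure μ] (h : X → ℝ) (hm : Measurable h) (hpos : ∀ x, 0 < h x) :
    Integrable (fun x => h x / (1 + h x)) μ := by
  refine (integrable_const (1 : ℝ)).mono'
    ((hm.div (measurable_const.add hm)).aestronglyMeasurable) (ae_of_all _ fun x => ?_)
  have h1 := hpos x
  rw [Real.norm_eq_abs, abs_of_nonneg (div_nonneg h1.le (by linarith)), div_le_one (by linarith)]
  linarith

private lemma key_t_eq_one {X : Type*} [MeasurableSpace X] (μ : Measure X)
    [IsProbabilityMeasure μ] (f : X → ℝ) (hf : Measurable f) (hfpos : ∀ x, 0 < f x)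
    {t : ℝ} (ht : 0 < t)
    (h : ∫ x, (t * f x) / (1 + t * f x) ∂μ = ∫ x, f x / (1 + f x) ∂μ) : t = 1 := by
  have hnb : (ae μ).NeBot := ae_neBot.mpr (NeZero.ne μ)
  have int1 : Integrable (fun x => (t * f x) / (1 + t * f x)) μ :=
    psi_integrable μ _ (hf.const_mul t) (fun x => mul_pos ht (hfpos x))
  have int2 : Integrable (fun x => f x / (1 + f x)) μ :=
    psi_integrable μ _ hf hfpos
  by_contra hne
  rcases lt_or_gt_of_ne hne with hlt | hgt
  · -- t < 1 : ψ(t f x) < ψ(f x) pointwise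
    have hpt : ∀ x, (t * f x) / (1 + t * f x) < f x / (1 + f x) := fun x =>
      psi_lt (mul_pos ht (hfpos x)) (by nlinarith [hfpos x])
    have h0 : ∫ x, (f x / (1 + f x) - (t * f x) / (1 + t * f x)) ∂μ = 0 := by
      rw [integral_sub int2 int1, h, sub_self]
    have := (integral_eq_zero_iff_of_nonneg_ae
      (ae_of_all _ fun x => by have := hpt x; simp only [Pi.zero_apply, Pi.sub_apply]; linarith)
      (int2.sub int1)).mp h0
    obtain ⟨x, hx⟩ := this.exists
    have := hpt x
    simp only [Pi.sub_apply, Pi.zero_apply] at hx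
    linarith
  · have hpt : ∀ x, f x / (1 + f x) < (t * f x) / (1 + t * f x) := fun x =>
      psi_lt (hfpos x) (by nlinarith [hfpos x])
    have h0 : ∫ x, ((t * f x) / (1 + t * f x) - f x / (1 + f x)) ∂μ = 0 := by
      rw [integral_sub int1 int2, h, sub_self]
    have := (integral_eq_zero_iff_of_nonneg_ae
      (ae_of_all _ fun x => by have := hpt x; simp only [Pi.zero_apply, Pi.sub_apply]; linarith)
      (int1.sub int2)).mp h0
    obtain ⟨x, hx⟩ := this.exists
    have := hpt x
    simp only [Pi.sub_apply, Pi.zero_apply] at hx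
    linarith

/-- If `G` is a locally compact second countable group acting measurably and
measure-preservingly on a standard Borel probability space `(X, μ)`, and there is a Borel
function `f : X → (0,∞)` with `Δ_G(g) = f(g•x)⁻¹ * f(x)` for `(λ_G × μ)`-a.e. `(g,x)`,
then `G` is unimodular, i.e. the modular function is identically `1`. -/
theorem stmt0 {G X : Type*} [Group G] [TopologicalSpace G] [IsTopologicalGroup G]
    [LocallyCompactSpace G] [SecondCountableTopology G]
    [MeasurableSpace G] [BorelSpace G]
    [MeasurableSpace X] [StandardBorelSpace X] [MulAction G X]
    (lam : Measure G) [lam.IsHaarMeasure]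
    (Δ : G →* ℝ) (hΔpos : ∀ g, 0 < Δ g)
    (hΔ : ∀ g : G, Measure.map (fun x => x * g⁻¹) lam = ENNReal.ofReal (Δ g) • lam)
    (μ : Measure X) [IsProbabilityMeasure μ]
    (hmeas : Measurable fun p : G × X => p.1 • p.2)
    (hmp : ∀ g : G, Measure.map (fun x => g • x) μ = μ)
    (f : X → ℝ) (hf : Measurable f) (hfpos : ∀ x, 0 < f x)
    (hae : ∀ᵐ p : G × X ∂(lam.prod μ), Δ p.1 = (f (p.1 • p.2))⁻¹ * f p.2) :
    ∀ g : G, Δ g = 1 := by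
  have hae' : ∀ᵐ g ∂lam, ∀ᵐ x ∂μ, Δ g = (f (g • x))⁻¹ * f x :=
    Measure.ae_ae_of_ae_prod hae
  have hS : ∀ᵐ g ∂lam, Δ g = 1 := by
    filter_upwards [hae'] with g hg
    refine key_t_eq_one μ f hf hfpos (hΔpos g) ?_
    have hmg : Measurable (fun x : X => g • x) := hmeas.comp measurable_prodMk_left
    have h1 : ∫ x, (Δ g * f x) / (1 + Δ g * f x) ∂μ
        = ∫ x, (Δ g * f (g • x)) / (1 + Δ g * f (g • x)) ∂μ := by
      conv_lhs => rw [← hmp g]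
      rw [integral_map hmg.aemeasurable (f := fun x => (Δ g * f x) / (1 + Δ g * f x))
        (((hf.const_mul (Δ g)).div (measurable_const.add (hf.const_mul (Δ g)))).aestronglyMeasurable)]
    rw [h1]
    refine integral_congr_ae ?_
    filter_upwards [hg] with x hx
    have hfg := (hfpos (g • x)).ne'
    have hfx : Δ g * f (g • x) = f x := by
      rw [hx]; field_simp
    rw [hfx]
  intro g0
  have hnb : (ae lam).NeBot := by
    refine ae_neBot.mpr fun h => ?_
    have : (0 : ℝ≥0∞) < lam Set.univ := isOpen_univ.measure_pos lam Set.univ_nonempty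
    simp [h] at this
  have hqmp : MeasurePreserving (fun s => g0⁻¹ * s) lam lam :=
    measurePreserving_mul_left lam g0⁻¹
  have hS2 : ∀ᵐ s ∂lam, Δ (g0⁻¹ * s) = 1 := hqmp.quasiMeasurePreserving.ae hS
  obtain ⟨s, h1, h2⟩ := (hS.and hS2).exists
  have : Δ g0 * Δ (g0⁻¹ * s) = Δ s := by
    rw [← map_mul]
    congr 1
    group
  rw [h2, mul_one, h1] at this
  exact this
end

section
/- Let G be a locally compact second countable group acting non-singularly on a standard Borel space X, and let ρ and η be equivalent quasi-invariant probability measures on X with Borel Radon–Nikodym derivative f = dη/dρ > 0. Given an ergodic decomposition ρ = ∫_Z ρ_z d(p_*ρ)(z) over a G-invariant Borel map p : X → Z, define g(z) := ∫_X f dρ_z. Then g is measurable, p_*ρ-almost everywhere finite and positive, and the measures η_z := (1/g(z)) f · ρ_z form an ergodic decomposition of η, i.e. η = ∫_Z η_z d(p_*η)(z); moreover η_z ∼ ρ_z for almost all z. -/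
open MeasureTheory Pointwise
open scoped ENNReal

/-- The measures `η_z := (1/g(z)) f · ρ_z`, where `g(z) = ∫ f dρ_z`. -/
noncomputable def condDensityMeasure {X Z : Type*} [MeasurableSpace X]
    (f : X → ℝ) (ρz : Z → Measure X) (z : Z) : Measure X :=
  (∫⁻ x, ENNReal.ofReal (f x) ∂(ρz z))⁻¹ •
    ((ρz z).withDensity fun x => ENNReal.ofReal (f x))

/-- given an ergodic decomposition `ρ = ∫_Z ρ_z d(p_*ρ)(z)` of a quasi-invariant
probability measure `ρ` and an equivalent measure `η = f·ρ` with `f > 0` Borel, the function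
`g(z) = ∫ f dρ_z` is measurable, a.e. finite and positive, and `η_z := (1/g(z)) f·ρ_z` is an
ergodic decomposition of `η`; moreover `η_z ∼ ρ_z` for almost all `z`. -/
theorem stmt1 {G X Z : Type*} [Group G] [MeasurableSpace X] [MeasurableSpace Z]
    [MulAction G X]
    (ρ η : Measure X) [IsProbabilityMeasure ρ] [IsProbabilityMeasure η]
    (hqi : ∀ γ : G, Measure.map (fun x => γ • x) ρ ≪ ρ ∧ ρ ≪ Measure.map (fun x => γ • x) ρ)
    (f : X → ℝ) (hf : Measurable f) (hfpos : ∀ x, 0 < f x)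
    (hη : η = ρ.withDensity fun x => ENNReal.ofReal (f x))
    (p : X → Z) (hp : Measurable p) (hpinv : ∀ (γ : G) (x : X), p (γ • x) = p x)
    (ρz : Z → Measure X)
    (hρzmeas : ∀ s : Set X, MeasurableSet s → Measurable fun z => ρz z s)
    (hρzprob : ∀ z, IsProbabilityMeasure (ρz z))
    (hρzsupp : ∀ z, ρz z (p ⁻¹' {z})ᶜ = 0)
    (hρzerg : ∀ z, ∀ s : Set X, MeasurableSet s → (∀ γ : G, γ • s = s) →
      ρz z s = 0 ∨ ρz z sᶜ = 0)
    (hdec : ∀ s : Set X, MeasurableSet s → ρ s = ∫⁻ z, ρz z s ∂(ρ.map p)) :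
    -- `g` is measurable
    (Measurable fun z => ∫⁻ x, ENNReal.ofReal (f x) ∂(ρz z)) ∧
    -- `g` is a.e. positive and finite
    (∀ᵐ z ∂(ρ.map p), 0 < ∫⁻ x, ENNReal.ofReal (f x) ∂(ρz z) ∧
      ∫⁻ x, ENNReal.ofReal (f x) ∂(ρz z) < ⊤) ∧
    -- the `η_z` are a.e. probability measures supported in the fibers of `p`
    (∀ᵐ z ∂(ρ.map p), IsProbabilityMeasure (condDensityMeasure f ρz z) ∧
      condDensityMeasure f ρz z (p ⁻¹' {z})ᶜ = 0) ∧
    -- the `η_z` are a.e. ergodic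
    (∀ᵐ z ∂(ρ.map p), ∀ s : Set X, MeasurableSet s → (∀ γ : G, γ • s = s) →
      condDensityMeasure f ρz z s = 0 ∨ condDensityMeasure f ρz z sᶜ = 0) ∧
    -- `η = ∫_Z η_z d(p_*η)(z)`
    (∀ s : Set X, MeasurableSet s →
      η s = ∫⁻ z, condDensityMeasure f ρz z s ∂(η.map p)) ∧
    -- `η_z ∼ ρ_z` for almost all `z`
    (∀ᵐ z ∂(ρ.map p), condDensityMeasure f ρz z ≪ ρz z ∧
      ρz z ≪ condDensityMeasure f ρz z) := by
  classical
  set F : X → ℝ≥0∞ := fun x => ENNReal.ofReal (f x) with hF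
  have hFmeas : Measurable F := hf.ennreal_ofReal
  have hFpos : ∀ x, F x ≠ 0 := fun x => (ENNReal.ofReal_pos.2 (hfpos x)).ne'
  set g : Z → ℝ≥0∞ := fun z => ∫⁻ x, F x ∂(ρz z) with hg
  -- measurability of the measure-valued map
  have hρzm : Measurable ρz := Measure.measurable_of_measurable_coe _ hρzmeas
  -- `ρ` is the bind of its pushforward along the kernel
  have hρbind : ρ = (ρ.map p).bind ρz := by
    ext s hs
    rw [Measure.bind_apply hs hρzm.aemeasurable]
    exact hdec s hs
  -- disintegration of lintegrals
  have hlint : ∀ (h : X → ℝ≥0∞), Measurable h →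
      ∫⁻ x, h x ∂ρ = ∫⁻ z, ∫⁻ x, h x ∂(ρz z) ∂(ρ.map p) := by
    intro h hh
    conv_lhs => rw [hρbind]
    exact Measure.lintegral_bind hρzm.aemeasurable hh.aemeasurable
  -- measurability of `g`
  have hgmeas : Measurable g := (Measure.measurable_lintegral hFmeas).comp hρzm
  -- total mass of `g`
  have hgint : ∫⁻ z, g z ∂(ρ.map p) = 1 := by
    rw [← hlint F hFmeas]
    have : ∫⁻ x, F x ∂ρ = η Set.univ := by
      rw [hη, ← setLIntegral_univ, ← withDensity_apply _ MeasurableSet.univ]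
    rw [this, measure_univ]
  -- `g` is a.e. finite
  have hgfin : ∀ᵐ z ∂(ρ.map p), g z < ⊤ :=
    ae_lt_top hgmeas (by rw [hgint]; exact ENNReal.one_ne_top)
  -- `g` is everywhere positive
  have hgpos : ∀ z, 0 < g z := by
    intro z
    have := hρzprob z
    rw [hg, lintegral_pos_iff_support hFmeas]
    have : Function.support F = Set.univ := Set.eq_univ_of_forall fun x => hFpos x
    rw [this, measure_univ]
    exact one_pos
  refine ⟨hgmeas, ?_, ?_, ?_, ?_, ?_⟩
  · filter_upwards [hgfin] with z hz using ⟨hgpos z, hz⟩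
  · -- probability measure and support
    filter_upwards [hgfin] with z hz
    constructor
    · constructor
      have huniv : (ρz z).withDensity F Set.univ = g z := by
        rw [withDensity_apply _ MeasurableSet.univ, setLIntegral_univ]
      rw [condDensityMeasure, Measure.smul_apply, smul_eq_mul, huniv]
      exact ENNReal.inv_mul_cancel (hgpos z).ne' hz.ne
    · rw [condDensityMeasure, Measure.smul_apply, smul_eq_mul,
        withDensity_absolutelyContinuous (ρz z) F (hρzsupp z), mul_zero]
  · -- ergodicity
    refine Filter.Eventually.of_forall fun z s hs hinv => ?_
    rcases hρzerg z s hs hinv with h | h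
    · left
      rw [condDensityMeasure, Measure.smul_apply, smul_eq_mul,
        withDensity_absolutelyContinuous (ρz z) F h, mul_zero]
    · right
      rw [condDensityMeasure, Measure.smul_apply, smul_eq_mul,
        withDensity_absolutelyContinuous (ρz z) F h, mul_zero]
  · -- decomposition of η
    intro s hs
    -- fiber lemma: integral of an indicator of a preimage
    have hfiber : ∀ (A : Set Z) (z : Z),
        ∫⁻ x, (p ⁻¹' A).indicator F x ∂(ρz z) = A.indicator g z := by
      intro A z
      have hz : ∀ᵐ x ∂(ρz z), p x = z := by
        rw [ae_iff]
        convert hρzsupp z using 2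
        ext x; simp
      by_cases hzA : z ∈ A
      · rw [Set.indicator_of_mem hzA]
        refine lintegral_congr_ae ?_
        filter_upwards [hz] with x hx
        exact Set.indicator_of_mem (by simp [Set.mem_preimage, hx, hzA]) F
      · rw [Set.indicator_of_notMem hzA]
        rw [← lintegral_zero (μ := ρz z)]
        refine lintegral_congr_ae ?_
        filter_upwards [hz] with x hx
        exact Set.indicator_of_notMem (by simp [Set.mem_preimage, hx, hzA]) F
    -- the pushforward of η has density g
    have hηmap : η.map p = (ρ.map p).withDensity g := by
      ext A hA
      rw [Measure.map_apply hp hA, hη, withDensity_apply _ (hp hA),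
        withDensity_apply _ hA, ← lintegral_indicator (hp hA) _,
        hlint _ (hFmeas.indicator (hp hA)), ← lintegral_indicator hA g]
      exact lintegral_congr fun z => hfiber A z
    -- the measurable integrand
    have hwmeas : Measurable fun z => (ρz z).withDensity F s := by
      have : ∀ z, (ρz z).withDensity F s = ∫⁻ x, s.indicator F x ∂(ρz z) := by
        intro z
        rw [withDensity_apply _ hs, lintegral_indicator hs _]
      simp_rw [this]
      exact (Measure.measurable_lintegral (hFmeas.indicator hs)).comp hρzm
    have hcmeas : Measurable fun z => condDensityMeasure f ρz z s := by
      simp only [condDensityMeasure, Measure.smul_apply, smul_eq_mul]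
      exact hgmeas.inv.mul hwmeas
    rw [hηmap, lintegral_withDensity_eq_lintegral_mul _ hgmeas hcmeas]
    have : ∫⁻ z, (g * fun z => condDensityMeasure f ρz z s) z ∂(ρ.map p)
        = ∫⁻ z, (ρz z).withDensity F s ∂(ρ.map p) := by
      refine lintegral_congr_ae ?_
      filter_upwards [hgfin] with z hz
      simp only [Pi.mul_apply, condDensityMeasure, Measure.smul_apply, smul_eq_mul]
      rw [← mul_assoc, ENNReal.mul_inv_cancel (hgpos z).ne' hz.ne, one_mul]
    rw [this]
    have : ∫⁻ z, (ρz z).withDensity F s ∂(ρ.map p)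
        = ∫⁻ z, ∫⁻ x, s.indicator F x ∂(ρz z) ∂(ρ.map p) := by
      refine lintegral_congr fun z => ?_
      rw [withDensity_apply _ hs, lintegral_indicator hs _]
    rw [this, ← hlint _ (hFmeas.indicator hs), lintegral_indicator hs,
      hη, withDensity_apply _ hs]
  · -- equivalence
    filter_upwards [hgfin] with z hz
    constructor
    · intro s hs0
      rw [condDensityMeasure, Measure.smul_apply, smul_eq_mul,
        withDensity_absolutelyContinuous (ρz z) F hs0, mul_zero]
    · have h1 : ρz z ≪ (ρz z).withDensity F :=
        withDensity_absolutelyContinuous' hFmeas.aemeasurable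
          (Filter.Eventually.of_forall hFpos)
      have h2 : (ρz z).withDensity F ≪ condDensityMeasure f ρz z := by
        intro s hs0
        rw [condDensityMeasure, Measure.smul_apply, smul_eq_mul] at hs0
        exact (mul_eq_zero.1 hs0).resolve_left
          (ENNReal.inv_ne_zero.2 hz.ne)
      exact h1.trans h2
end

section
/- If s₀ ≠ 1, the subgroup H = {[[s₀ⁿ, b],[0,1]] : n ∈ ℤ, b ∈ ℝ} is a closed cocompact subgroup of the ax+b group H̃ = {[[s, b],[0,1]] : s > 0, b ∈ ℝ}, and the modular function of H̃ restricted to H equals the modular function of H (both given by [[s,b],[0,1]] ↦ s⁻¹). -/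
open Matrix MeasureTheory Topology Filter

set_option maxHeartbeats 1000000
set_option synthInstance.maxHeartbeats 400000

namespace Stmt6Aux

noncomputable section

instance : SecondCountableTopology (Matrix (Fin 2) (Fin 2) ℝ) :=
  inferInstanceAs (SecondCountableTopology (Fin 2 → Fin 2 → ℝ))

instance : SecondCountableTopology (Matrix (Fin 2) (Fin 2) ℝ)ᵐᵒᵖ :=
  MulOpposite.opHomeomorph.symm.isEmbedding.secondCountableTopology

instance : SecondCountableTopology (GL (Fin 2) ℝ) :=
  Units.isEmbedding_embedProduct.secondCountableTopology

instance (S : Subgroup (GL (Fin 2) ℝ)) : SecondCountableTopology ↥S :=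
  IsEmbedding.subtypeVal.secondCountableTopology

instance (Ht K : Subgroup (GL (Fin 2) ℝ)) : SecondCountableTopology ↥(K.subgroupOf Ht) :=
  IsEmbedding.subtypeVal.secondCountableTopology

/-- The invertible upper triangular matrix `[[a, b], [0, 1]]`. -/
def mk2 (a b : ℝ) (ha : a ≠ 0) : GL (Fin 2) ℝ :=
  ⟨!![a, b; 0, 1], !![a⁻¹, -(b * a⁻¹); 0, 1], by
    ext i j
    fin_cases i <;> fin_cases j <;>
      · simp [Matrix.mul_apply, Fin.sum_univ_two, mul_inv_cancel₀ ha, inv_mul_cancel₀ ha]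
        try ring_nf
        try field_simp
        try simp, by
    ext i j
    fin_cases i <;> fin_cases j <;>
      · simp [Matrix.mul_apply, Fin.sum_univ_two, mul_inv_cancel₀ ha, inv_mul_cancel₀ ha]
        try ring_nf
        try field_simp⟩

@[simp] lemma mk2_val (a b : ℝ) (ha : a ≠ 0) :
    ((mk2 a b ha : GL (Fin 2) ℝ) : Matrix (Fin 2) (Fin 2) ℝ) = !![a, b; 0, 1] := rfl

@[simp] lemma mk2_inv_val (a b : ℝ) (ha : a ≠ 0) :
    (((mk2 a b ha)⁻¹ : GL (Fin 2) ℝ) : Matrix (Fin 2) (Fin 2) ℝ)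
      = !![a⁻¹, -(b * a⁻¹); 0, 1] := rfl

/-- Continuity of families of such matrices. -/
lemma continuous_mk2 {X : Type*} [TopologicalSpace X] {p q : X → ℝ}
    (hp : Continuous p) (hq : Continuous q) (hne : ∀ x, p x ≠ 0) :
    Continuous (fun x => mk2 (p x) (q x) (hne x)) := by
  rw [Units.continuous_iff]
  constructor
  · show Continuous fun x => (!![p x, q x; 0, 1] : Matrix (Fin 2) (Fin 2) ℝ)
    apply continuous_matrix
    intro i j
    fin_cases i <;> fin_cases j <;> simp <;>
      first
        | exact hp
        | exact hq
        | exact continuous_const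
  · show Continuous fun x => (!![(p x)⁻¹, -(q x * (p x)⁻¹); 0, 1] : Matrix (Fin 2) (Fin 2) ℝ)
    apply continuous_matrix
    intro i j
    fin_cases i <;> fin_cases j <;> simp <;>
      first
        | exact hp.inv₀ hne
        | exact (hq.mul (hp.inv₀ hne)).neg
        | exact ((hq.mul (hp.inv₀ hne)).neg)
        | exact continuous_const

section Main

variable {s₀ : ℝ} {Ht K : Subgroup (GL (Fin 2) ℝ)}

/-- Membership criterion for `Ht`. -/
def PHt (Ht : Subgroup (GL (Fin 2) ℝ)) : Prop :=
  ∀ M : GL (Fin 2) ℝ, M ∈ Ht ↔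
      ((M : Matrix (Fin 2) (Fin 2) ℝ) 1 0 = 0 ∧
       (M : Matrix (Fin 2) (Fin 2) ℝ) 1 1 = 1 ∧
       0 < (M : Matrix (Fin 2) (Fin 2) ℝ) 0 0)

/-- Membership criterion for `K`. -/
def PK (s₀ : ℝ) (K : Subgroup (GL (Fin 2) ℝ)) : Prop :=
  ∀ M : GL (Fin 2) ℝ, M ∈ K ↔
      ((M : Matrix (Fin 2) (Fin 2) ℝ) 1 0 = 0 ∧
       (M : Matrix (Fin 2) (Fin 2) ℝ) 1 1 = 1 ∧
       ∃ n : ℤ, (M : Matrix (Fin 2) (Fin 2) ℝ) 0 0 = s₀ ^ n)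

variable (hs₀pos : 0 < s₀) (hs₀ : s₀ ≠ 1) (hHt : PHt Ht) (hK : PK s₀ K)

/-- The element `[[t, b], [0, 1]]` of `Ht`. -/
def mkHt (t b : ℝ) (ht : 0 < t) : ↥Ht :=
  ⟨mk2 t b ht.ne', (hHt _).2 (by refine ⟨by simp, by simp, ?_⟩; simpa using ht)⟩

/-- The element `[[s₀ ^ n, b], [0, 1]]` of `H = K.subgroupOf Ht`. -/
def mkH (n : ℤ) (b : ℝ) : ↥(K.subgroupOf Ht) :=
  ⟨mkHt hHt (s₀ ^ n) b (zpow_pos hs₀pos n),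
    Subgroup.mem_subgroupOf.2 ((hK _).2 ⟨by simp [mkHt], by simp [mkHt], n, by simp [mkHt]⟩)⟩

@[simp] lemma mkH_matrix (n : ℤ) (b : ℝ) :
    ((((mkH hs₀pos hHt hK n b : ↥(K.subgroupOf Ht)) : ↥Ht) : GL (Fin 2) ℝ) :
        Matrix (Fin 2) (Fin 2) ℝ) = !![s₀ ^ n, b; 0, 1] := rfl

/-- The `(0,0)` entry, i.e. the `s`–coordinate. -/
def sigH (g : ↥(K.subgroupOf Ht)) : ℝ :=
  ((((g : ↥Ht) : GL (Fin 2) ℝ)) : Matrix (Fin 2) (Fin 2) ℝ) 0 0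

/-- The `(0,1)` entry, i.e. the `b`–coordinate. -/
def betH (g : ↥(K.subgroupOf Ht)) : ℝ :=
  ((((g : ↥Ht) : GL (Fin 2) ℝ)) : Matrix (Fin 2) (Fin 2) ℝ) 0 1

@[simp] lemma sigH_mkH (n : ℤ) (b : ℝ) :
    sigH (mkH hs₀pos hHt hK n b) = s₀ ^ n := by
  simp [sigH]

@[simp] lemma betH_mkH (n : ℤ) (b : ℝ) :
    betH (mkH hs₀pos hHt hK n b) = b := by
  simp [betH]

include hHt in
lemma sigH_pos (g : ↥(K.subgroupOf Ht)) : 0 < sigH g :=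
  ((hHt _).1 (g : ↥Ht).2).2.2

/-- Every element of `H` has the canonical form. -/
lemma exists_repr (h : ↥(K.subgroupOf Ht)) :
    ∃ n : ℤ, ∃ b : ℝ, h = mkH hs₀pos hHt hK n b := by
  obtain ⟨h10, h11, n, h00⟩ := (hK _).1 (Subgroup.mem_subgroupOf.1 h.2)
  refine ⟨n, (((h : ↥Ht) : GL (Fin 2) ℝ) : Matrix (Fin 2) (Fin 2) ℝ) 0 1,
    Subtype.ext (Subtype.ext (Units.ext ?_))⟩
  show (((h : ↥Ht) : GL (Fin 2) ℝ) : Matrix (Fin 2) (Fin 2) ℝ) = _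
  conv_lhs => rw [Matrix.eta_fin_two (((h : ↥Ht) : GL (Fin 2) ℝ) : Matrix (Fin 2) (Fin 2) ℝ)]
  rw [h10, h11, h00]
  rfl

lemma mkH_mul (n m : ℤ) (b c : ℝ) :
    mkH hs₀pos hHt hK n b * mkH hs₀pos hHt hK m c
      = mkH hs₀pos hHt hK (n + m) (s₀ ^ n * c + b) := by
  refine Subtype.ext (Subtype.ext (Units.ext ?_))
  show (!![s₀ ^ n, b; 0, 1] * !![s₀ ^ m, c; 0, 1] : Matrix (Fin 2) (Fin 2) ℝ) = _
  rw [Matrix.mul_fin_two]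
  show _ = !![s₀ ^ (n + m), s₀ ^ n * c + b; 0, 1]
  rw [zpow_add₀ hs₀pos.ne']
  norm_num

include hs₀pos hHt hK in
lemma sigH_mul (x y : ↥(K.subgroupOf Ht)) : sigH (x * y) = sigH x * sigH y := by
  obtain ⟨n, b, rfl⟩ := exists_repr hs₀pos hHt hK x
  obtain ⟨m, c, rfl⟩ := exists_repr hs₀pos hHt hK y
  rw [mkH_mul]
  simp [zpow_add₀ hs₀pos.ne']

lemma sigH_one : sigH (1 : ↥(K.subgroupOf Ht)) = 1 := by
  simp [sigH]

include hs₀pos hHt hK in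
lemma sigH_inv (g : ↥(K.subgroupOf Ht)) : sigH g⁻¹ = (sigH g)⁻¹ := by
  refine eq_inv_of_mul_eq_one_left ?_
  rw [← sigH_mul hs₀pos hHt hK, inv_mul_cancel, sigH_one]

lemma continuous_coe_matrix :
    Continuous (fun g : ↥(K.subgroupOf Ht) =>
      ((((g : ↥Ht) : GL (Fin 2) ℝ)) : Matrix (Fin 2) (Fin 2) ℝ)) :=
  Units.continuous_val.comp (continuous_subtype_val.comp continuous_subtype_val)

lemma continuous_matrix_entry (i j : Fin 2) :
    Continuous (fun g : ↥(K.subgroupOf Ht) =>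
      ((((g : ↥Ht) : GL (Fin 2) ℝ)) : Matrix (Fin 2) (Fin 2) ℝ) i j) :=
  (continuous_apply j).comp ((continuous_apply i).comp continuous_coe_matrix)

lemma continuous_sigH : Continuous (sigH (Ht := Ht) (K := K)) :=
  continuous_matrix_entry 0 0

lemma continuous_betH : Continuous (betH (Ht := Ht) (K := K)) :=
  continuous_matrix_entry 0 1

lemma continuous_mkH (n : ℤ) :
    Continuous (fun b => mkH hs₀pos hHt hK n b) :=
  ((continuous_mk2 continuous_const continuous_id fun _ => (zpow_pos hs₀pos n).ne').subtype_mk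
    _).subtype_mk _

include hs₀pos hs₀ in
lemma logb_zpow (n : ℤ) : Real.logb s₀ (s₀ ^ n) = n := by
  simp only [Real.logb, Real.log_zpow]
  rw [mul_div_assoc, div_self (Real.log_ne_zero_of_pos_of_ne_one hs₀pos hs₀), mul_one]

/-- The `n`-coordinate, recovered continuously. -/
def phiH (s₀ : ℝ) (g : ↥(K.subgroupOf Ht)) : ℤ :=
  round (Real.logb s₀ (sigH g))

include hs₀ in
lemma phiH_mkH (n : ℤ) (b : ℝ) :
    phiH s₀ (mkH hs₀pos hHt hK n b) = n := by
  unfold phiH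
  rw [sigH_mkH, logb_zpow hs₀pos hs₀, round_intCast]

include hs₀pos hs₀ hHt hK in
lemma continuous_phiH : Continuous (phiH (Ht := Ht) (K := K) s₀) := by
  rw [continuous_iff_continuousAt]
  intro h
  obtain ⟨n, b, rfl⟩ := exists_repr hs₀pos hHt hK h
  have hlogb : Continuous (fun g : ↥(K.subgroupOf Ht) => Real.logb s₀ (sigH g)) := by
    rw [continuous_iff_continuousAt]
    intro g
    exact (Real.continuousAt_logb (sigH_pos hHt g).ne').comp continuous_sigH.continuousAt
  have hval : Real.logb s₀ (sigH (mkH hs₀pos hHt hK n b)) = n := by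
    rw [sigH_mkH, logb_zpow hs₀pos hs₀]
  have hmem : (fun g : ↥(K.subgroupOf Ht) => Real.logb s₀ (sigH g)) ⁻¹'
      Set.Ioo ((n : ℝ) - 1/2) ((n : ℝ) + 1/2) ∈ 𝓝 (mkH hs₀pos hHt hK n b) := by
    apply hlogb.continuousAt.preimage_mem_nhds
    rw [hval]
    exact Ioo_mem_nhds (by linarith) (by linarith)
  refine Filter.EventuallyEq.continuousAt (y := (n : ℤ)) ?_
  filter_upwards [hmem] with g hg
  rw [phiH, round_eq, Int.floor_eq_iff]
  obtain ⟨hg1, hg2⟩ := hg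
  constructor
  · linarith
  · push_cast
    linarith

include hs₀pos hs₀ hHt hK in
lemma weaklyLocallyCompact : WeaklyLocallyCompactSpace ↥(K.subgroupOf Ht) := by
  constructor
  intro h
  obtain ⟨n, b, rfl⟩ := exists_repr hs₀pos hHt hK h
  refine ⟨(fun c => mkH hs₀pos hHt hK n c) '' Set.Icc (b - 1) (b + 1),
    isCompact_Icc.image (continuous_mkH hs₀pos hHt hK n), ?_⟩
  rw [mem_nhds_iff]
  refine ⟨(phiH s₀) ⁻¹' {n} ∩ betH ⁻¹' Set.Ioo (b - 1) (b + 1), ?_, ?_, Set.mem_inter ?_ ?_⟩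
  · intro g hg
    obtain ⟨n', b', rfl⟩ := exists_repr hs₀pos hHt hK g
    have hn : n' = n := by
      have h1 := hg.1
      rwa [Set.mem_preimage, Set.mem_singleton_iff, phiH_mkH hs₀pos hs₀ hHt hK] at h1
    subst hn
    have hb : b' ∈ Set.Ioo (b - 1) (b + 1) := by
      have h2 := hg.2
      rwa [Set.mem_preimage, betH_mkH] at h2
    exact ⟨b', ⟨hb.1.le, hb.2.le⟩, rfl⟩
  · exact ((continuous_phiH hs₀pos hs₀ hHt hK).isOpen_preimage _ (isOpen_discrete _)).inter
      (continuous_betH.isOpen_preimage _ isOpen_Ioo)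
  · rw [Set.mem_preimage, Set.mem_singleton_iff]
    exact phiH_mkH hs₀pos hs₀ hHt hK n b
  · rw [Set.mem_preimage, betH_mkH]
    exact ⟨by linarith, by linarith⟩

section Meas

variable [MeasurableSpace ↥(K.subgroupOf Ht)] [BorelSpace ↥(K.subgroupOf Ht)]

/-- An explicit left Haar measure on `H`. -/
def lam0 : Measure ↥(K.subgroupOf Ht) :=
  Measure.sum fun n : ℤ =>
    ENNReal.ofReal (s₀ ^ (-n)) • Measure.map (fun b => mkH hs₀pos hHt hK n b) volume

lemma map_lam0 (F : ↥(K.subgroupOf Ht) → ↥(K.subgroupOf Ht)) (hF : Continuous F) :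
    Measure.map F (lam0 hs₀pos hHt hK) = Measure.sum fun n : ℤ =>
      ENNReal.ofReal (s₀ ^ (-n)) •
        Measure.map (F ∘ (fun b => mkH hs₀pos hHt hK n b)) volume := by
  rw [lam0, Measure.map_sum hF.measurable.aemeasurable]
  congr 1
  funext n
  rw [Measure.map_smul,
    Measure.map_map hF.measurable (continuous_mkH hs₀pos hHt hK n).measurable]

include hs₀pos in
lemma map_affine_volume (m : ℤ) (a : ℝ) :
    Measure.map (fun b : ℝ => s₀ ^ m * b + a) volume
      = ENNReal.ofReal ((s₀ ^ m)⁻¹) • volume := by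
  have h1 : (fun b : ℝ => s₀ ^ m * b + a) = (fun x : ℝ => x + a) ∘ (fun x : ℝ => s₀ ^ m * x) :=
    rfl
  rw [h1, ← Measure.map_map (measurable_add_const a) (measurable_const_mul _),
    Real.map_volume_mul_left (zpow_pos hs₀pos m).ne', Measure.map_smul,
    map_add_right_eq_self volume a, abs_of_pos (inv_pos.2 (zpow_pos hs₀pos m))]

include hs₀pos in
lemma ofReal_zpow_mul (i j : ℤ) :
    ENNReal.ofReal (s₀ ^ i) * ENNReal.ofReal (s₀ ^ j) = ENNReal.ofReal (s₀ ^ (i + j)) := by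
  rw [← ENNReal.ofReal_mul (zpow_pos hs₀pos i).le, ← zpow_add₀ hs₀pos.ne']

lemma isMulLeftInvariant_lam0 : (lam0 hs₀pos hHt hK).IsMulLeftInvariant := by
  constructor
  intro g
  obtain ⟨m, a, rfl⟩ := exists_repr hs₀pos hHt hK g
  rw [map_lam0 hs₀pos hHt hK _ (continuous_mul_left _)]
  have hcomp : ∀ n : ℤ, ((mkH hs₀pos hHt hK m a * ·) ∘ (fun b => mkH hs₀pos hHt hK n b))
      = (fun b => mkH hs₀pos hHt hK (m + n) b) ∘ (fun b : ℝ => s₀ ^ m * b + a) := by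
    intro n
    funext b
    simp only [Function.comp_apply]
    rw [mkH_mul]
  ext s hs
  rw [Measure.sum_apply _ hs, lam0, Measure.sum_apply _ hs]
  have hterm : ∀ n : ℤ,
      (ENNReal.ofReal (s₀ ^ (-n)) •
        Measure.map ((mkH hs₀pos hHt hK m a * ·) ∘ (fun b => mkH hs₀pos hHt hK n b)) volume) s
      = (fun k : ℤ => (ENNReal.ofReal (s₀ ^ (-k)) •
          Measure.map (fun b => mkH hs₀pos hHt hK k b) volume) s) (m + n) := by
    intro n
    rw [hcomp n,
      ← Measure.map_map (continuous_mkH hs₀pos hHt hK (m + n)).measurable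
        (by fun_prop : Measurable fun b : ℝ => s₀ ^ m * b + a),
      map_affine_volume hs₀pos m a, Measure.map_smul]
    simp only [Measure.smul_apply, smul_eq_mul, ← mul_assoc]
    congr 1
    rw [← _root_.zpow_neg, ofReal_zpow_mul hs₀pos]
    congr 2
    ring
  calc ∑' n : ℤ, (ENNReal.ofReal (s₀ ^ (-n)) •
        Measure.map ((mkH hs₀pos hHt hK m a * ·) ∘ (fun b => mkH hs₀pos hHt hK n b)) volume) s
      = ∑' n : ℤ, (fun k : ℤ => (ENNReal.ofReal (s₀ ^ (-k)) •
          Measure.map (fun b => mkH hs₀pos hHt hK k b) volume) s) (m + n) :=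
        tsum_congr hterm
    _ = _ := by
        simpa using (Equiv.addLeft m).tsum_eq fun k : ℤ => (ENNReal.ofReal (s₀ ^ (-k)) •
          Measure.map (fun b => mkH hs₀pos hHt hK k b) volume) s

lemma map_mul_right_lam0 (g : ↥(K.subgroupOf Ht)) :
    Measure.map (fun x => x * g) (lam0 hs₀pos hHt hK)
      = ENNReal.ofReal (sigH g) • lam0 hs₀pos hHt hK := by
  obtain ⟨m, a, rfl⟩ := exists_repr hs₀pos hHt hK g
  rw [map_lam0 hs₀pos hHt hK _ (continuous_mul_right _), sigH_mkH]
  have hcomp : ∀ n : ℤ, ((· * mkH hs₀pos hHt hK m a) ∘ (fun b => mkH hs₀pos hHt hK n b))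
      = (fun b => mkH hs₀pos hHt hK (n + m) b) ∘ (fun b : ℝ => s₀ ^ n * a + b) := by
    intro n
    funext b
    simp only [Function.comp_apply]
    rw [mkH_mul]
  ext s hs
  rw [Measure.smul_apply, lam0, Measure.sum_apply _ hs, Measure.sum_apply _ hs, smul_eq_mul,
    ← ENNReal.tsum_mul_left]
  have hterm : ∀ n : ℤ,
      (ENNReal.ofReal (s₀ ^ (-n)) •
        Measure.map ((· * mkH hs₀pos hHt hK m a) ∘ (fun b => mkH hs₀pos hHt hK n b)) volume) s
      = (fun k : ℤ => ENNReal.ofReal (s₀ ^ m) * ((ENNReal.ofReal (s₀ ^ (-k)) •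
          Measure.map (fun b => mkH hs₀pos hHt hK k b) volume) s)) (n + m) := by
    intro n
    rw [hcomp n,
      ← Measure.map_map (continuous_mkH hs₀pos hHt hK (n + m)).measurable
        (by fun_prop : Measurable fun b : ℝ => s₀ ^ n * a + b),
      map_add_left_eq_self volume (s₀ ^ n * a)]
    simp only [Measure.smul_apply, smul_eq_mul, ← mul_assoc]
    congr 1
    rw [ofReal_zpow_mul hs₀pos]
    congr 2
    ring
  calc ∑' n : ℤ, (ENNReal.ofReal (s₀ ^ (-n)) •
        Measure.map ((· * mkH hs₀pos hHt hK m a) ∘ (fun b => mkH hs₀pos hHt hK n b)) volume) s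
      = ∑' n : ℤ, (fun k : ℤ => ENNReal.ofReal (s₀ ^ m) * ((ENNReal.ofReal (s₀ ^ (-k)) •
          Measure.map (fun b => mkH hs₀pos hHt hK k b) volume) s)) (n + m) :=
        tsum_congr hterm
    _ = _ := by
        simpa using (Equiv.addRight m).tsum_eq fun k : ℤ => ENNReal.ofReal (s₀ ^ m) *
          ((ENNReal.ofReal (s₀ ^ (-k)) •
            Measure.map (fun b => mkH hs₀pos hHt hK k b) volume) s)

lemma isOpenPos_lam0 : (lam0 hs₀pos hHt hK).IsOpenPosMeasure := by
  constructor
  intro U hU hne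
  obtain ⟨h, hh⟩ := hne
  obtain ⟨n, b, rfl⟩ := exists_repr hs₀pos hHt hK h
  have hle : (ENNReal.ofReal (s₀ ^ (-n)) •
      Measure.map (fun c => mkH hs₀pos hHt hK n c) volume) U ≤ lam0 hs₀pos hHt hK U :=
    Measure.le_iff'.1 (Measure.le_sum _ n) U
  have hpos : 0 < (ENNReal.ofReal (s₀ ^ (-n)) •
      Measure.map (fun c => mkH hs₀pos hHt hK n c) volume) U := by
    rw [Measure.smul_apply,
      Measure.map_apply (continuous_mkH hs₀pos hHt hK n).measurable hU.measurableSet,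
      smul_eq_mul]
    refine ENNReal.mul_pos (ENNReal.ofReal_pos.2 (zpow_pos hs₀pos _)).ne' ?_
    exact IsOpen.measure_ne_zero volume (hU.preimage (continuous_mkH hs₀pos hHt hK n)) ⟨b, hh⟩
  exact (lt_of_lt_of_le hpos hle).ne'

include hs₀ in
lemma isFiniteOnCompacts_lam0 : IsFiniteMeasureOnCompacts (lam0 hs₀pos hHt hK) := by
  constructor
  intro C hC
  have hCmeas : MeasurableSet C := hC.isClosed.measurableSet
  rw [lam0, Measure.sum_apply _ hCmeas]
  have hfin : ((phiH s₀) '' C).Finite :=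
    (hC.image (continuous_phiH hs₀pos hs₀ hHt hK)).finite_of_discrete
  rw [tsum_eq_sum (s := hfin.toFinset)
    (by
      intro n hn
      have hempty : (fun b => mkH hs₀pos hHt hK n b) ⁻¹' C = ∅ := by
        by_contra hne
        obtain ⟨b, hb⟩ := Set.nonempty_iff_ne_empty.2 hne
        apply hn
        rw [Set.Finite.mem_toFinset]
        exact ⟨mkH hs₀pos hHt hK n b, hb, phiH_mkH hs₀pos hs₀ hHt hK n b⟩
      rw [Measure.smul_apply,
        Measure.map_apply (continuous_mkH hs₀pos hHt hK n).measurable hCmeas, hempty]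
      simp)]
  rw [ENNReal.sum_lt_top]
  intro n _
  rw [Measure.smul_apply,
    Measure.map_apply (continuous_mkH hs₀pos hHt hK n).measurable hCmeas, smul_eq_mul]
  refine ENNReal.mul_lt_top ENNReal.ofReal_lt_top ?_
  have hsub : (fun b => mkH hs₀pos hHt hK n b) ⁻¹' C ⊆ betH '' C := by
    intro b hb
    exact ⟨mkH hs₀pos hHt hK n b, hb, betH_mkH hs₀pos hHt hK n b⟩
  have hcpt : IsCompact ((fun b => mkH hs₀pos hHt hK n b) ⁻¹' C) :=
    IsCompact.of_isClosed_subset (hC.image continuous_betH)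
      (hC.isClosed.preimage (continuous_mkH hs₀pos hHt hK n)) hsub
  exact hcpt.measure_lt_top

include hs₀ in
lemma isHaar_lam0 : (lam0 hs₀pos hHt hK).IsHaarMeasure := by
  haveI := isMulLeftInvariant_lam0 hs₀pos hHt hK
  haveI := isOpenPos_lam0 hs₀pos hHt hK
  haveI := isFiniteOnCompacts_lam0 hs₀pos hs₀ hHt hK
  exact ⟨⟩

end Meas

end Main

end

end Stmt6Aux

open Stmt6Aux

/-- for `s₀ ≠ 1`, the subgroup `H = {[[s₀ⁿ, b],[0,1]] : n ∈ ℤ, b ∈ ℝ}` is a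
closed cocompact subgroup of the `ax+b` group `H̃ = {[[s,b],[0,1]] : s > 0, b ∈ ℝ}`, and the
modular function of `H̃` restricted to `H` equals the modular function of `H` (both given by
`[[s,b],[0,1]] ↦ s⁻¹`). -/
theorem stmt6 (s₀ : ℝ) (hs₀pos : 0 < s₀) (hs₀ : s₀ ≠ 1)
    (Ht K : Subgroup (GL (Fin 2) ℝ))
    (hHt : ∀ M : GL (Fin 2) ℝ, M ∈ Ht ↔
      ((M : Matrix (Fin 2) (Fin 2) ℝ) 1 0 = 0 ∧
       (M : Matrix (Fin 2) (Fin 2) ℝ) 1 1 = 1 ∧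
       0 < (M : Matrix (Fin 2) (Fin 2) ℝ) 0 0))
    (hK : ∀ M : GL (Fin 2) ℝ, M ∈ K ↔
      ((M : Matrix (Fin 2) (Fin 2) ℝ) 1 0 = 0 ∧
       (M : Matrix (Fin 2) (Fin 2) ℝ) 1 1 = 1 ∧
       ∃ n : ℤ, (M : Matrix (Fin 2) (Fin 2) ℝ) 0 0 = s₀ ^ n))
    (hle : K ≤ Ht)
    [MeasurableSpace ↥(K.subgroupOf Ht)] [BorelSpace ↥(K.subgroupOf Ht)]
    (lamK : Measure ↥(K.subgroupOf Ht)) [lamK.IsHaarMeasure] :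
    -- `H` is closed in `H̃`
    IsClosed ((K.subgroupOf Ht : Subgroup ↥Ht) : Set ↥Ht) ∧
    -- `H` is cocompact in `H̃`
    CompactSpace (↥Ht ⧸ K.subgroupOf Ht) ∧
    -- the modular function of `H` is `[[s,b],[0,1]] ↦ s⁻¹`, which is exactly the restriction
    -- to `H` of the modular function of `H̃`
    (∀ g : ↥(K.subgroupOf Ht), Measure.map (fun x => x * g⁻¹) lamK
      = ENNReal.ofReal (((((g : ↥Ht) : GL (Fin 2) ℝ) : Matrix (Fin 2) (Fin 2) ℝ) 0 0)⁻¹)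
          • lamK) := by
  have hlog : Real.log s₀ ≠ 0 := Real.log_ne_zero_of_pos_of_ne_one hs₀pos hs₀
  have hcoe : Continuous (fun x : ↥Ht =>
      ((x : GL (Fin 2) ℝ) : Matrix (Fin 2) (Fin 2) ℝ)) :=
    Units.continuous_val.comp continuous_subtype_val
  have hentry : Continuous (fun x : ↥Ht =>
      ((x : GL (Fin 2) ℝ) : Matrix (Fin 2) (Fin 2) ℝ) 0 0) :=
    (continuous_apply (0 : Fin 2)).comp ((continuous_apply (0 : Fin 2)).comp hcoe)
  have hpos : ∀ x : ↥Ht, 0 < ((x : GL (Fin 2) ℝ) : Matrix (Fin 2) (Fin 2) ℝ) 0 0 := fun x =>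
    ((hHt _).1 x.2).2.2
  refine ⟨?_, ?_, ?_⟩
  · -- closedness
    have hset : ((K.subgroupOf Ht : Subgroup ↥Ht) : Set ↥Ht)
        = (fun x : ↥Ht => Real.logb s₀ (((x : GL (Fin 2) ℝ) : Matrix (Fin 2) (Fin 2) ℝ) 0 0))
            ⁻¹' (Set.range ((↑) : ℤ → ℝ)) := by
      ext x
      simp only [SetLike.mem_coe, Subgroup.mem_subgroupOf, hK, Set.mem_preimage, Set.mem_range]
      constructor
      · rintro ⟨-, -, n, h00⟩
        exact ⟨n, by rw [h00, logb_zpow hs₀pos hs₀]⟩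
      · rintro ⟨n, hn⟩
        refine ⟨((hHt _).1 x.2).1, ((hHt _).1 x.2).2.1, n, ?_⟩
        have h1 := Real.rpow_logb hs₀pos hs₀ (hpos x)
        rw [← h1, ← hn, Real.rpow_intCast]
    rw [hset]
    apply IsClosed.preimage
    · rw [continuous_iff_continuousAt]
      intro x
      exact ContinuousAt.comp (g := Real.logb s₀)
        (f := fun x : ↥Ht => ((x : GL (Fin 2) ℝ) : Matrix (Fin 2) (Fin 2) ℝ) 0 0)
        (Real.continuousAt_logb (hpos x).ne') hentry.continuousAt
    · exact Int.isClosedEmbedding_coe_real.isClosed_range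
  · -- cocompactness
    have hθ : Continuous (fun u : ℝ => mkHt hHt (Real.exp u) 0 (Real.exp_pos u)) :=
      (continuous_mk2 Real.continuous_exp continuous_const
        fun u => (Real.exp_pos u).ne').subtype_mk _
    have hCco : IsCompact ((fun u : ℝ => mkHt hHt (Real.exp u) 0 (Real.exp_pos u)) ''
        Set.Icc (-|Real.log s₀|) |Real.log s₀|) := isCompact_Icc.image hθ
    have huniv : (Set.univ : Set (↥Ht ⧸ K.subgroupOf Ht))
        = QuotientGroup.mk '' ((fun u : ℝ => mkHt hHt (Real.exp u) 0 (Real.exp_pos u)) ''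
            Set.Icc (-|Real.log s₀|) |Real.log s₀|) := by
      refine (Set.eq_univ_of_forall ?_).symm
      intro q
      induction q using QuotientGroup.induction_on with
      | H x =>
        obtain ⟨s, hsdef⟩ : ∃ s : ℝ, s = ((x : GL (Fin 2) ℝ) : Matrix (Fin 2) (Fin 2) ℝ) 0 0 :=
          ⟨_, rfl⟩
        have hs : 0 < s := hsdef ▸ hpos x
        obtain ⟨n, hndef⟩ : ∃ n : ℤ, n = ⌊Real.log s / Real.log s₀⌋ := ⟨_, rfl⟩
        obtain ⟨u, hudef⟩ : ∃ u : ℝ, u = Real.log s - n * Real.log s₀ := ⟨_, rfl⟩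
        have hru : u = (Real.log s / Real.log s₀ - n) * Real.log s₀ := by
          rw [hudef, sub_mul, div_mul_cancel₀ _ hlog]
        have hu : |u| ≤ |Real.log s₀| := by
          rw [hru, abs_mul]
          refine mul_le_of_le_one_left (abs_nonneg _) ?_
          have h0 : (0:ℝ) ≤ Real.log s / Real.log s₀ - n := by
            rw [hndef]
            exact sub_nonneg.2 (Int.floor_le _)
          rw [abs_of_nonneg h0, hndef, Int.self_sub_floor]
          exact (Int.fract_lt_one _).le
        have hexp : Real.exp u = s * (s₀ ^ n)⁻¹ := by
          rw [hudef, Real.exp_sub, Real.exp_log hs, div_eq_mul_inv]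
          congr 2
          rw [← Real.rpow_intCast s₀ n, Real.rpow_def_of_pos hs₀pos, mul_comm]
        obtain ⟨bb, hbbdef⟩ : ∃ bb : ℝ,
            bb = ((x : GL (Fin 2) ℝ) : Matrix (Fin 2) (Fin 2) ℝ) 0 1 := ⟨_, rfl⟩
        have hxm : ((x : GL (Fin 2) ℝ) : Matrix (Fin 2) (Fin 2) ℝ) = !![s, bb; 0, 1] := by
          conv_lhs => rw [Matrix.eta_fin_two (((x : GL (Fin 2) ℝ)) : Matrix (Fin 2) (Fin 2) ℝ)]
          rw [((hHt _).1 x.2).1, ((hHt _).1 x.2).2.1, ← hsdef, ← hbbdef]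
        have hprod : ((((mkHt hHt (Real.exp u) 0 (Real.exp_pos u))⁻¹ * x : ↥Ht) :
              GL (Fin 2) ℝ) : Matrix (Fin 2) (Fin 2) ℝ)
            = !![(Real.exp u)⁻¹, -(0 * (Real.exp u)⁻¹); 0, 1] * !![s, bb; 0, 1] := by
          calc ((((mkHt hHt (Real.exp u) 0 (Real.exp_pos u))⁻¹ * x : ↥Ht) :
                GL (Fin 2) ℝ) : Matrix (Fin 2) (Fin 2) ℝ)
              = ((((((mkHt hHt (Real.exp u) 0 (Real.exp_pos u) : ↥Ht) : GL (Fin 2) ℝ))⁻¹ :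
                  GL (Fin 2) ℝ) : Matrix (Fin 2) (Fin 2) ℝ)) *
                  ((x : GL (Fin 2) ℝ) : Matrix (Fin 2) (Fin 2) ℝ) := rfl
            _ = _ := by rw [hxm]; rfl
        have hmem : (mkHt hHt (Real.exp u) 0 (Real.exp_pos u))⁻¹ * x ∈ K.subgroupOf Ht := by
          refine Subgroup.mem_subgroupOf.2 ((hK _).2 ?_)
          refine ⟨?_, ?_, n, ?_⟩ <;> rw [hprod, Matrix.mul_fin_two]
          · simp
          · simp
          · show (Real.exp u)⁻¹ * s + -(0 * (Real.exp u)⁻¹) * 0 = s₀ ^ n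
            rw [hexp, mul_inv, inv_inv]
            field_simp
            simp
        refine ⟨mkHt hHt (Real.exp u) 0 (Real.exp_pos u), ⟨u, Set.mem_Icc.2 (abs_le.1 hu), rfl⟩,
          ?_⟩
        exact QuotientGroup.eq.2 hmem
    exact ⟨by rw [huniv]; exact hCco.image continuous_quotient_mk'⟩
  · -- modular function
    intro g
    haveI := weaklyLocallyCompact hs₀pos hs₀ hHt hK
    haveI : LocallyCompactSpace ↥(K.subgroupOf Ht) := inferInstance
    haveI := isHaar_lam0 hs₀pos hs₀ hHt hK
    have huniq := Measure.isMulLeftInvariant_eq_smul lamK (lam0 hs₀pos hHt hK)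
    have hmap := map_mul_right_lam0 hs₀pos hHt hK g⁻¹
    have hσ : sigH g⁻¹ = (sigH g)⁻¹ := sigH_inv hs₀pos hHt hK g
    show Measure.map (fun x => x * g⁻¹) lamK = ENNReal.ofReal ((sigH g)⁻¹) • lamK
    rw [huniq, ENNReal.smul_def, Measure.map_smul, hmap, hσ, smul_smul, smul_smul, mul_comm]
end

section
/- Let G ↷ (X, μ) be a non-singular action with a cross section X₀ ⊂ X (i.e. there is an open identity neighbourhood U ⊂ G with θ|: U × X₀ → X injective and G·X₀ conull). Then the relation ℛ_{X₀} := {(x, x') ∈ X₀ × X₀ : x' ∈ G·x} is a Borel equivalence relation on X₀ with countable equivalence classes. -/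
open MeasureTheory

open Set Topology

lemma aux_insep_prod {G X : Type*} [TopologicalSpace G] [MeasurableSpace G] [BorelSpace G]
    [MeasurableSpace X] {n m : G} (h : Inseparable n m) {S : Set (G × X)}
    (hS : MeasurableSet S) (x : X) : (n, x) ∈ S ↔ (m, x) ∈ S := by
  let m' : MeasurableSpace (G × X) :=
    { MeasurableSet' := fun S => ∀ y : X, ((n, y) ∈ S ↔ (m, y) ∈ S)
      measurableSet_empty := by simp
      measurableSet_compl := fun S hS y => by simp only [Set.mem_compl_iff]; exact (hS y).not
      measurableSet_iUnion := fun f hf y => by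
        simp only [Set.mem_iUnion]; exact exists_congr fun i => hf i y }
  have hle : (Prod.instMeasurableSpace : MeasurableSpace (G × X)) ≤ m' := by
    refine sup_le ?_ ?_
    · rintro S ⟨A, hA, rfl⟩ y
      exact h.mem_measurableSet_iff hA
    · rintro S ⟨B, hB, rfl⟩ y
      simp
  exact hle S hS x

lemma aux_polish {G : Type*} [TopologicalSpace G] [T2Space G] [LocallyCompactSpace G]
    [SecondCountableTopology G] : PolishSpace G := by
  letI : MetricSpace G := TopologicalSpace.metrizableSpaceMetric G
  set c : G → UniformSpace.Completion G := (↑) with hc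
  have hiso : Isometry c := UniformSpace.Completion.coe_isometry
  have hemb : IsEmbedding c := hiso.isEmbedding
  have hdense : DenseRange c := UniformSpace.Completion.denseRange_coe
  have hopen : IsOpen (Set.range c) := by
    rw [isOpen_iff_mem_nhds]
    rintro y ⟨x, rfl⟩
    obtain ⟨K, hKc, hKn⟩ := exists_compact_mem_nhds x
    have hmap : c '' K ∈ 𝓝[Set.range c] (c x) := by
      rw [← hemb.map_nhds_eq]
      exact Filter.image_mem_map hKn
    obtain ⟨V, hVn, hsub⟩ := (mem_nhdsWithin_iff_exists_mem_nhds_inter).1 hmap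
    obtain ⟨W, hWV, hW, hxW⟩ := mem_nhds_iff.1 hVn
    have hWsub : W ⊆ Set.range c := by
      intro z hz
      have hzc : z ∈ closure (W ∩ Set.range c) := by
        rw [mem_closure_iff]
        intro O hO hzO
        have : (O ∩ W).Nonempty := ⟨z, hzO, hz⟩
        obtain ⟨w, ⟨hwO, hwW⟩, hwr⟩ := Dense.inter_open_nonempty hdense (O ∩ W) (hO.inter hW) this
        exact ⟨w, hwO, hwW, hwr⟩
      have hclosed : IsClosed (c '' K) := (hKc.image hiso.continuous).isClosed
      have : z ∈ c '' K := by
        refine hclosed.closure_subset_iff.2 ?_ hzc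
        intro w ⟨hwW, hwr⟩
        exact hsub ⟨hWV hwW, hwr⟩
      exact ⟨this.choose, this.choose_spec.2⟩
    exact Filter.mem_of_superset (hW.mem_nhds hxW) hWsub
  have hpol : PolishSpace (Set.range c) := hopen.polishSpace
  exact hemb.toHomeomorph.isClosedEmbedding.polishSpace


/-- if `X₀` is a cross section for a non-singular action `G ↷ (X, μ)` (i.e.
the action map is injective on `U × X₀` for some open identity neighbourhood `U ⊂ G` and
`G·X₀` is conull), then `ℛ_{X₀} = {(x, x') ∈ X₀ × X₀ : x' ∈ G·x}` is a Borel equivalence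
relation on `X₀` with countable classes. -/
theorem stmt19 {G X : Type*} [Group G] [TopologicalSpace G] [IsTopologicalGroup G]
    [LocallyCompactSpace G] [SecondCountableTopology G] [MeasurableSpace G] [BorelSpace G]
    [MeasurableSpace X] [StandardBorelSpace X] [MulAction G X]
    (hactmeas : Measurable fun p : G × X => p.1 • p.2)
    (μ : Measure X) [IsProbabilityMeasure μ]
    (X₀ : Set X) (hX₀ : MeasurableSet X₀)
    (U : Set G) (hU : IsOpen U) (hUe : (1 : G) ∈ U)
    (hinj : Set.InjOn (fun p : G × X => p.1 • p.2) (U ×ˢ X₀))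
    (hconull : μ {x : X | ∃ g : G, ∃ x₀ ∈ X₀, g • x₀ = x}ᶜ = 0) :
    -- `ℛ_{X₀}` is Borel
    MeasurableSet {p : X × X | p.1 ∈ X₀ ∧ p.2 ∈ X₀ ∧ ∃ g : G, g • p.1 = p.2} ∧
    -- it is an equivalence relation on `X₀`
    Equivalence (fun x y : X₀ => ∃ g : G, g • (x : X) = (y : X)) ∧
    -- with countable classes
    (∀ x : X, {y : X | y ∈ X₀ ∧ ∃ g : G, g • x = y}.Countable) := by
  
  -- X₀ is nonempty
  have hne : ∃ x₀, x₀ ∈ X₀ := by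
    by_contra h
    push_neg at h
    have he : {x : X | ∃ g : G, ∃ x₀ ∈ X₀, g • x₀ = x} = ∅ := by
      ext x; simp only [Set.mem_setOf_eq, Set.mem_empty_iff_false, iff_false]
      rintro ⟨g, x₀, hx₀, -⟩; exact h x₀ hx₀
    rw [he, Set.compl_empty] at hconull
    simp [measure_univ] at hconull
  obtain ⟨x₀, hx₀⟩ := hne
  -- inseparable-from-1 elements are trivial
  have key : ∀ n : G, Inseparable n 1 → n = 1 := by
    intro n hn
    have hnU : n ∈ U := (hn.mem_open_iff hU).2 hUe
    have hfix : n • x₀ = x₀ := by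
      have hS : MeasurableSet ((fun p : G × X => p.1 • p.2) ⁻¹' {x₀}) :=
        hactmeas (measurableSet_singleton x₀)
      have h1 : ((1 : G), x₀) ∈ (fun p : G × X => p.1 • p.2) ⁻¹' {x₀} := by simp
      have := (aux_insep_prod hn hS x₀).2 h1
      simpa using this
    have := hinj (Set.mk_mem_prod hnU hx₀) (Set.mk_mem_prod hUe hx₀)
      (show (fun p : G × X => p.1 • p.2) (n, x₀) = (fun p : G × X => p.1 • p.2) (1, x₀) by
        simp [hfix])
    exact congrArg Prod.fst this
  -- G is T2
  haveI : T2Space G := by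
    apply IsTopologicalGroup.t2Space_of_one_sep
    intro x hx
    by_contra hcon
    push_neg at hcon
    have hspec : x ⤳ 1 := by
      rw [specializes_iff_pure]
      intro V hV
      exact hcon V hV
    have h1 : x⁻¹ ⤳ (1 : G) := by
      simpa using hspec.map continuous_inv
    have h2 : (1 : G) ⤳ x⁻¹ := by
      simpa using hspec.map (continuous_const.mul continuous_id : Continuous fun z : G => x⁻¹ * z)
    exact hx (inv_eq_one.1 (key _ (h1.antisymm h2)))
  haveI : PolishSpace G := aux_polish
  haveI : StandardBorelSpace G := inferInstance
  refine ⟨?_, ?_, ?_⟩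
  · -- Borelness
    obtain ⟨T, hTc, hTU⟩ := TopologicalSpace.countable_cover_nhds
      (f := fun g : G => (fun u => g * u) '' U) (fun g => by
        have : IsOpen ((fun u => g * u) '' U) := (Homeomorph.mulLeft g).isOpenMap U hU
        exact this.mem_nhds ⟨1, hUe, mul_one g⟩)
    have hmeas : ∀ t : G, Measurable (fun p : G × X => ((p.2, (t * p.1) • p.2) : X × X)) :=
      fun t => measurable_snd.prodMk
        (hactmeas.comp ((measurable_fst.const_mul t).prodMk measurable_snd))
    have hinj' : ∀ t : G,
        Set.InjOn (fun p : G × X => ((p.2, (t * p.1) • p.2) : X × X)) (U ×ˢ X₀) := by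
      intro t p hp q hq hpq
      simp only [Prod.mk.injEq] at hpq
      obtain ⟨h2, h1⟩ := hpq
      have h3 : t • (p.1 • p.2) = t • (q.1 • q.2) := by
        rw [← mul_smul, ← mul_smul]; exact h1
      exact hinj hp hq (smul_left_cancel t h3)
    have himg : ∀ t : G,
        MeasurableSet ((fun p : G × X => ((p.2, (t * p.1) • p.2) : X × X)) '' (U ×ˢ X₀)) :=
      fun t => MeasurableSet.image_of_measurable_injOn
        (hU.measurableSet.prod hX₀) (hmeas t) (hinj' t)
    have heq : {p : X × X | p.1 ∈ X₀ ∧ p.2 ∈ X₀ ∧ ∃ g : G, g • p.1 = p.2} =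
        (X₀ ×ˢ X₀) ∩ ⋃ t ∈ T, (fun p : G × X => ((p.2, (t * p.1) • p.2) : X × X)) '' (U ×ˢ X₀) := by
      ext ⟨x, y⟩
      simp only [Set.mem_setOf_eq, Set.mem_inter_iff, Set.mem_prod, Set.mem_iUnion,
        Set.mem_image, Prod.exists]
      constructor
      · rintro ⟨hx, hy, g, hg⟩
        refine ⟨⟨hx, hy⟩, ?_⟩
        have : g ∈ ⋃ t ∈ T, (fun u => t * u) '' U := by rw [hTU]; trivial
        simp only [Set.mem_iUnion, Set.mem_image] at this
        obtain ⟨t, ht, u, hu, rfl⟩ := this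
        refine ⟨t, ht, u, x, ⟨hu, hx⟩, ?_⟩
        exact congrArg (Prod.mk x) hg
      · rintro ⟨⟨hx, hy⟩, t, ht, u, x', ⟨hu, hx'⟩, heq⟩
        simp only [Prod.mk.injEq] at heq
        obtain ⟨rfl, hy'⟩ := heq
        exact ⟨hx, hy, t * u, hy'⟩
    rw [heq]
    exact (hX₀.prod hX₀).inter (MeasurableSet.biUnion hTc fun t _ => himg t)
  · -- equivalence relation
    refine ⟨fun x => ⟨1, one_smul _ _⟩, ?_, ?_⟩
    · rintro x y ⟨g, hg⟩
      exact ⟨g⁻¹, by rw [← hg, inv_smul_smul]⟩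
    · rintro x y z ⟨g, hg⟩ ⟨h, hh⟩
      exact ⟨h * g, by rw [mul_smul, hg, hh]⟩
  · -- countable classes
    intro x
    set S : Set G := {g : G | g • x ∈ X₀} with hS
    have hCeq : {y : X | y ∈ X₀ ∧ ∃ g : G, g • x = y} = (fun g : G => g • x) '' S := by
      ext y
      simp only [Set.mem_setOf_eq, Set.mem_image]
      constructor
      · rintro ⟨hy, g, rfl⟩; exact ⟨g, hy, rfl⟩
      · rintro ⟨g, hg, rfl⟩; exact ⟨hg, g, rfl⟩
    rw [hCeq]
    refine Set.Countable.image ?_ _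
    -- S is separated: each point has a neighbourhood meeting S only in itself
    have hsep : ∀ g ∈ S, ∀ h ∈ S, h ∈ (fun u => u * g) '' U → h = g := by
      rintro g hg h hh ⟨u, hu, rfl⟩
      have h1 : (fun p : G × X => p.1 • p.2) (u, g • x) =
          (fun p : G × X => p.1 • p.2) (1, (u * g) • x) := by
        simp [mul_smul]
      have := hinj (Set.mk_mem_prod hu hg) (Set.mk_mem_prod hUe hh) h1
      have hu1 : u = 1 := congrArg Prod.fst this
      subst hu1
      simp
    obtain ⟨b, hbc, -, hb⟩ := TopologicalSpace.exists_countable_basis G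
    have hchoice : ∀ g : G, g ∈ S → ∃ v ∈ b, g ∈ v ∧ v ⊆ (fun u => u * g) '' U := by
      intro g hg
      exact hb.exists_subset_of_mem_open ⟨1, hUe, one_mul g⟩
        ((Homeomorph.mulRight g).isOpenMap U hU)
    classical
    let f : G → Set G := fun g => if h : g ∈ S then (hchoice g h).choose else ∅
    refine Set.MapsTo.countable_of_injOn (f := f) (t := b) ?_ ?_ hbc
    · intro g hg
      simp only [f, dif_pos hg]
      exact (hchoice g hg).choose_spec.1
    · intro g hg h hh hfgh
      simp only [f, dif_pos hg, dif_pos hh] at hfgh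
      have hgv := (hchoice g hg).choose_spec.2.1
      have hhv := (hchoice h hh).choose_spec.2.1
      have hsubg := (hchoice g hg).choose_spec.2.2
      exact (hsep g hg h hh (hsubg (hfgh ▸ hhv))).symm
end
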